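/- Completeness of AX_det for the class M_det of deterministic causal simulation models: every L-formula true in every deterministic causal simulation model is a theorem of AX_det; equivalently, every AX_det-consistent L-formula is satisfied by some model in M_det. -/

import Mathlib

set_option maxHeartbeats 1000000

namespace CausalSim

/-! ### Propositional syntax -/

/-- Propositional formulas over atoms `X_i`. -/
inductive PropForm : Type
  | atom : ℕ → PropForm
  | neg : PropForm → PropForm
  | and : PropForm → PropForm → PropForm
  | or : PropForm → PropForm → PropForm
  deriving DecidableEq

def PropForm.imp (φ ψ : PropForm) : PropForm := .or (.neg φ) ψ

/-- A fixed propositional contradiction. -/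
def PropForm.bot : PropForm := .and (.atom 0) (.neg (.atom 0))

/-- Its negation, a fixed tautology. -/
def PropForm.top : PropForm := PropForm.neg PropForm.bot

def PropForm.eval (v : ℕ → Bool) : PropForm → Bool
  | .atom i => v i
  | .neg φ => !(φ.eval v)
  | .and φ ψ => φ.eval v && ψ.eval v
  | .or φ ψ => φ.eval v || ψ.eval v

/-- `L_int`: ordered conjunctions of literals over distinct atoms, represented by
the list of literals `(index, polarity)`, with strictly increasing indices.
The empty list represents the empty intervention `⊤`. -/
abbrev Lint : Type := {l : List (ℕ × Bool) // l.Chain' fun p q => p.1 < q.1}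

instance : DecidableEq Lint := fun a b =>
  decidable_of_iff (a.1 = b.1) Subtype.ext_iff.symm

def Lint.top : Lint := ⟨[], List.isChain_nil⟩

/-- The partial assignment (intervention) specified by `α ∈ L_int`. -/
def Lint.itv (α : Lint) : ℕ → Option Bool :=
  fun i => (α.1.find? fun p => p.1 == i).map Prod.snd

def PropForm.lit (p : ℕ × Bool) : PropForm :=
  if p.2 then .atom p.1 else .neg (.atom p.1)

/-- `α ∈ L_int` regarded as a propositional formula (conjunction of its literals;
`⊤` for the empty intervention). -/
def Lint.toProp (α : Lint) : PropForm :=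
  match α.1 with
  | [] => PropForm.top
  | p :: rest => rest.foldl (fun acc q => .and acc (.lit q)) (.lit p)

/-! ### The language `L` -/

/-- The causal simulation language `L`: propositional formulas over the atoms
`X ∪ L_cond`, where a conditional `[α]β` has antecedent `α ∈ L_int` and
consequent `β ∈ L_prop`. -/
inductive LForm : Type
  | atom : ℕ → LForm
  | cond : Lint → PropForm → LForm
  | neg : LForm → LForm
  | and : LForm → LForm → LForm
  | or : LForm → LForm → LForm

def LForm.imp (φ ψ : LForm) : LForm := .or (.neg φ) ψ

def LForm.iff (φ ψ : LForm) : LForm := .and (φ.imp ψ) (ψ.imp φ)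

/-- `⟨α⟩β`, an abbreviation for `¬[α]¬β`. -/
def LForm.dia (α : Lint) (β : PropForm) : LForm := .neg (.cond α (.neg β))

/-- The embedding of `L_prop` into `L`. -/
def PropForm.toL : PropForm → LForm
  | .atom i => .atom i
  | .neg φ => .neg φ.toL
  | .and φ ψ => .and φ.toL ψ.toL
  | .or φ ψ => .or φ.toL ψ.toL

/-- Evaluation of an `L`-formula treating the elements of `X ∪ L_cond` as
propositional atoms: `v` assigns values to the `X`-atoms and `w` to the
conditional atoms. -/
def LForm.evalA (v : ℕ → Bool) (w : Lint → PropForm → Bool) : LForm → Bool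
  | .atom i => v i
  | .cond α β => w α β
  | .neg φ => !(φ.evalA v w)
  | .and φ ψ => φ.evalA v w && ψ.evalA v w
  | .or φ ψ => φ.evalA v w || ψ.evalA v w

/-- Substitution instances of propositional tautologies over the atoms `X ∪ L_cond`. -/
def Tautology (φ : LForm) : Prop := ∀ v w, φ.evalA v w = true

/-! ### Turing machines over a Boolean variable tape, and interventions -/

/-- A transition rule `((q, read), (q', write, moveRight))`. -/
abbrev Rule : Type := (ℕ × Bool) × (ℕ × Bool × Bool)

/-- A (possibly non-deterministic) Turing machine, given by its finite list of
transition rules; the initial control state is `0`, and the machine halts in a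
configuration to which no rule applies. -/
abbrev Machine : Type := List Rule

/-- A configuration: control state, head position, and tape contents. -/
structure Cfg where
  q : ℕ
  pos : ℕ
  tape : ℕ → Bool

/-- The initial tape: the intervention `itv` first sets the intervened variables. -/
def initTape (itv : ℕ → Option Bool) (x : ℕ → Bool) : ℕ → Bool :=
  fun i => (itv i).getD (x i)

/-- Writing under an intervention: writes to intervened variables are ignored. -/
def writeTape (itv : ℕ → Option Bool) (t : ℕ → Bool) (pos : ℕ) (b : Bool) : ℕ → Bool :=
  if itv pos = none then Function.update t pos b else t

def movePos (p : ℕ) (right : Bool) : ℕ := if right then p + 1 else p - 1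

/-- One step of the intervened machine `I_itv(T)`. -/
def MStep (T : Machine) (itv : ℕ → Option Bool) (c c' : Cfg) : Prop :=
  ∃ r ∈ T, r.1 = (c.q, c.tape c.pos) ∧
    c' = ⟨r.2.1, movePos c.pos r.2.2.2, writeTape itv c.tape c.pos r.2.2.1⟩

/-- A halted configuration: no rule applies. -/
def Halted (T : Machine) (c : Cfg) : Prop := ∀ r ∈ T, r.1 ≠ (c.q, c.tape c.pos)

/-- The set of result tapes of halting executions of `I_itv(T)` on input `x`. -/
def Outputs (T : Machine) (itv : ℕ → Option Bool) (x : ℕ → Bool) : Set (ℕ → Bool) :=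
  {y | ∃ c : Cfg, Relation.ReflTransGen (MStep T itv) ⟨0, 0, initTape itv x⟩ c ∧
        Halted T c ∧ c.tape = y}

/-- Deterministic machines: at most one rule per (state, read symbol). -/
def Machine.Det (T : Machine) : Prop := ∀ r₁ ∈ T, ∀ r₂ ∈ T, r₁.1 = r₂.1 → r₁ = r₂

/-- State descriptions have finite support. -/
def FinSupp (x : ℕ → Bool) : Prop := {i | x i = true}.Finite

/-- Machines with at least one halting execution on every input tape under
every intervention. -/
def Machine.TotalHalting (T : Machine) : Prop :=
  ∀ (α : Lint) (x : ℕ → Bool), FinSupp x → (Outputs T α.itv x).Nonempty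

/-- Finite state machines: over all inputs and interventions, the machine reads and
writes only boundedly many tape variables. -/
def Machine.FiniteState (T : Machine) : Prop :=
  ∃ B : ℕ, ∀ (α : Lint) (x : ℕ → Bool), FinSupp x →
    ∀ c : Cfg, Relation.ReflTransGen (MStep T α.itv) ⟨0, 0, initTape α.itv x⟩ c → c.pos < B

/-! ### Causal simulation models and satisfaction -/

/-- A causal simulation model: a machine together with a state description with
finite support. -/
structure CSM where
  T : Machine
  x : ℕ → Bool
  fin : FinSupp x

/-- Satisfaction, generically in the map sending each intervention `α ∈ L_int`
to the set of output tapes of the corresponding halting executions. -/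
def SatGen (O : Lint → Set (ℕ → Bool)) (x : ℕ → Bool) : LForm → Prop
  | .atom i => x i = true
  | .cond α β => ∀ y ∈ O α, β.eval y = true
  | .neg φ => ¬ SatGen O x φ
  | .and φ ψ => SatGen O x φ ∧ SatGen O x ψ
  | .or φ ψ => SatGen O x φ ∨ SatGen O x ψ

/-- `(T, x) ⊨ φ`. -/
def CSM.Sat (M : CSM) (φ : LForm) : Prop :=
  SatGen (fun α => Outputs M.T α.itv M.x) M.x φ

/-- The class `M` of all causal simulation models. -/
def inM (_ : CSM) : Prop := True

/-- The class `M_det`. -/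
def inMdet (M : CSM) : Prop := M.T.Det

/-- The class `M↓`. -/
def inMhalt (M : CSM) : Prop := M.T.TotalHalting

/-- The class `M↓_det`. -/
def inMdethalt (M : CSM) : Prop := M.T.Det ∧ M.T.TotalHalting

/-! ### The axiomatic systems -/

/-- Derivability from: propositional tautologies (over atoms `X ∪ L_cond`),
the axioms `R` and `K`, extra axioms `extra`, modus ponens, and the rule `RW`. -/
inductive Deriv (extra : LForm → Prop) : LForm → Prop
  | taut {φ} : Tautology φ → Deriv extra φ
  | extra {φ} : extra φ → Deriv extra φ
  | axR (α : Lint) : Deriv extra (.cond α α.toProp)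
  | axK (α : Lint) (β γ : PropForm) :
      Deriv extra ((LForm.cond α (β.imp γ)).imp ((LForm.cond α β).imp (.cond α γ)))
  | mp {φ ψ} : Deriv extra (φ.imp ψ) → Deriv extra φ → Deriv extra ψ
  | rw (α : Lint) {β β' : PropForm} :
      Deriv extra (β.imp β').toL → Deriv extra ((LForm.cond α β).imp (.cond α β'))

/-- Instances of axiom `F : ⟨α⟩β → [α]β`. -/
def axF (φ : LForm) : Prop :=
  ∃ (α : Lint) (β : PropForm), φ = (LForm.dia α β).imp (.cond α β)

/-- Instances of axiom `D : [α]β → ⟨α⟩β`. -/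
def axD (φ : LForm) : Prop :=
  ∃ (α : Lint) (β : PropForm), φ = (LForm.cond α β).imp (LForm.dia α β)

def AX : LForm → Prop := Deriv fun _ => False
def AXdet : LForm → Prop := Deriv axF
def AXhalt : LForm → Prop := Deriv axD
def AXdethalt : LForm → Prop := Deriv fun φ => axF φ ∨ axD φ

end CausalSim
namespace CausalSim

/-! ### Normal form clauses and selection functions -/

def bigAndL : List LForm → LForm
  | [] => PropForm.top.toL
  | φ :: rest => rest.foldl .and φ

def bigOrL : List LForm → LForm
  | [] => PropForm.bot.toL
  | φ :: rest => rest.foldl .or φ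

def bigOrP : List PropForm → PropForm
  | [] => PropForm.bot
  | φ :: rest => rest.foldl .or φ

/-- The data of a conjunctive clause
`π ∧ ⋀_{i∈I}([α_i] ⋁_{j∈J_i} β_{i,j}) ∧ ⋀_{k∈K} ⟨α_k⟩ β_k`. -/
structure Clause where
  pi : PropForm
  boxes : List (Lint × List Lint)
  dias : List (Lint × Lint)

/-- The `α_i` (for distinct `i ∈ I`) are pairwise distinct. -/
def Clause.wf (δ : Clause) : Prop := (δ.boxes.map Prod.fst).Pairwise (· ≠ ·)

def Clause.toLForm (δ : Clause) : LForm :=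
  .and δ.pi.toL (.and
    (bigAndL (δ.boxes.map fun p => .cond p.1 (bigOrP (p.2.map Lint.toProp))))
    (bigAndL (δ.dias.map fun p => LForm.dia p.1 p.2.toProp)))

/-- `S_δ`: the antecedents occurring in the clause `δ`. -/
def Clause.ants (δ : Clause) : List Lint := δ.boxes.map Prod.fst ++ δ.dias.map Prod.fst

/-- A list of literals is propositionally consistent. -/
def LitsConsistent (l : List (ℕ × Bool)) : Prop :=
  ∀ i, ¬((i, true) ∈ l ∧ (i, false) ∈ l)

/-- `γ` is the `L_int`-equivalent of the conjunction of the literals `l`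
(reordering and deletion of repeated literals). -/
def Lint.IsEquivOf (γ : Lint) (l : List (ℕ × Bool)) : Prop := γ.1.toFinset = l.toFinset

/-- `f` is a selection function for the clause `δ`. -/
def IsSelection (δ : Clause) (f : Lint → List Lint) : Prop :=
  (∀ α ∈ δ.ants, α ∉ δ.dias.map Prod.fst → f α = []) ∧
  (∀ α ∈ δ.dias.map Prod.fst, ∃ sel : Lint × Lint → Lint,
    f α = (δ.dias.filter fun p => decide (p.1 = α)).map sel ∧
    ∀ p ∈ δ.dias, p.1 = α →
      (∀ J, (α, J) ∈ δ.boxes →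
        ∃ j ∈ J, LitsConsistent (α.1 ++ p.2.1 ++ j.1) ∧
          (sel p).IsEquivOf (α.1 ++ p.2.1 ++ j.1)) ∧
      (α ∉ δ.boxes.map Prod.fst →
        LitsConsistent (α.1 ++ p.2.1) ∧ (sel p).IsEquivOf (α.1 ++ p.2.1)))

/-! ### Sizes -/

def PropForm.size : PropForm → ℕ
  | .atom i => i + 1
  | .neg φ => φ.size + 1
  | .and φ ψ => φ.size + ψ.size + 1
  | .or φ ψ => φ.size + ψ.size + 1

def Lint.size (α : Lint) : ℕ := (α.1.map fun p => p.1 + 1).sum + 1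

/-- `|φ|`, the number of symbols of `φ` (an occurrence of the atom `X_i`
contributing `i + 1` symbols). -/
def LForm.size : LForm → ℕ
  | .atom i => i + 1
  | .cond α β => α.size + β.size + 1
  | .neg φ => φ.size + 1
  | .and φ ψ => φ.size + ψ.size + 1
  | .or φ ψ => φ.size + ψ.size + 1

def PropForm.maxAtom : PropForm → ℕ
  | .atom i => i
  | .neg φ => φ.maxAtom
  | .and φ ψ => max φ.maxAtom ψ.maxAtom
  | .or φ ψ => max φ.maxAtom ψ.maxAtom

def Lint.maxAtom (α : Lint) : ℕ := (α.1.map Prod.fst).foldr max 0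

/-- `N`: the largest index of an atom occurring in `φ`. -/
def LForm.maxAtom : LForm → ℕ
  | .atom i => i
  | .cond α β => max α.maxAtom β.maxAtom
  | .neg φ => φ.maxAtom
  | .and φ ψ => max φ.maxAtom ψ.maxAtom
  | .or φ ψ => max φ.maxAtom ψ.maxAtom

/-- `S_φ`: the antecedents of the conditionals occurring in `φ`. -/
def LForm.ants : LForm → List Lint
  | .atom _ => []
  | .cond α _ => [α]
  | .neg φ => φ.ants
  | .and φ ψ => φ.ants ++ ψ.ants
  | .or φ ψ => φ.ants ++ ψ.ants

/-! ### The programming language `PL` -/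

/-- Assignment statements `X_i := c`, `X_i := X_j`, `X_i := !X_j`. -/
inductive BAssign : Type
  | const (i : ℕ) (c : Bool)
  | copy (i j : ℕ)
  | negcopy (i j : ℕ)
  deriving DecidableEq

def BAssign.target : BAssign → ℕ
  | .const i _ => i
  | .copy i _ => i
  | .negcopy i _ => i

def BAssign.maxVar : BAssign → ℕ
  | .const i _ => i
  | .copy i j => max i j
  | .negcopy i j => max i j

/-- Tests `X_i = c`, `X_i = X_j`, `X_i != X_j`, and conjunctions thereof. -/
inductive BTest : Type
  | eqc (i : ℕ) (c : Bool)
  | eqv (i j : ℕ)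
  | nev (i j : ℕ)
  | and (t₁ t₂ : BTest)
  deriving DecidableEq

def BTest.eval (s : ℕ → Bool) : BTest → Bool
  | .eqc i c => s i == c
  | .eqv i j => s i == s j
  | .nev i j => !(s i == s j)
  | .and t₁ t₂ => t₁.eval s && t₂.eval s

def BTest.size : BTest → ℕ
  | .eqc _ _ => 1
  | .eqv _ _ => 1
  | .nev _ _ => 1
  | .and t₁ t₂ => t₁.size + t₂.size + 1

/-- Programs of `PL`: the empty program, assignments, sequencing,
if-then-else, nondeterministic choice, and the unconditional infinite loop. -/
inductive Prog : Type
  | empty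
  | assign (a : BAssign)
  | seq (p q : Prog)
  | ite (c : BTest) (p q : Prog)
  | choose (ps : List Prog)
  | loop

mutual
  /-- The length of a program. -/
  def Prog.size : Prog → ℕ
    | .empty => 1
    | .assign _ => 1
    | .seq p q => p.size + q.size + 1
    | .ite c p q => c.size + p.size + q.size + 1
    | .choose ps => Prog.sizeList ps + 1
    | .loop => 1
  def Prog.sizeList : List Prog → ℕ
    | [] => 0
    | p :: ps => p.size + Prog.sizeList ps
end

/-- The effect of an assignment under an intervention: writes to intervened
variables are ignored. -/
def applyAssign (itv : ℕ → Option Bool) (a : BAssign) (s : ℕ → Bool) : ℕ → Bool :=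
  let v : Bool := match a with
    | .const _ c => c
    | .copy _ j => s j
    | .negcopy _ j => !(s j)
  if itv a.target = none then Function.update s a.target v else s

/-- Big-step semantics of `PL` under an intervention. A `loop`-statement has no
halting execution, and a `choose`-statement executes one of its branches. -/
inductive BigStep (itv : ℕ → Option Bool) : Prog → (ℕ → Bool) → (ℕ → Bool) → Prop
  | empty (s) : BigStep itv .empty s s
  | assign (a s) : BigStep itv (.assign a) s (applyAssign itv a s)
  | seq {p q s t u} : BigStep itv p s t → BigStep itv q t u → BigStep itv (.seq p q) s u
  | iteT {c p q s t} : c.eval s = true → BigStep itv p s t → BigStep itv (.ite c p q) s t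
  | iteF {c p q s t} : c.eval s = false → BigStep itv q s t → BigStep itv (.ite c p q) s t
  | choose {ps p s t} : p ∈ ps → BigStep itv p s t → BigStep itv (.choose ps) s t

/-- The set of result tapes of halting executions of the intervened program. -/
def ProgOutputs (P : Prog) (itv : ℕ → Option Bool) (x : ℕ → Bool) : Set (ℕ → Bool) :=
  {y | BigStep itv P (initTape itv x) y}

/-- Satisfaction `(T_P, x) ⊨ φ` for the machine compiled from the program `P`
(whose executions are those of `P`). -/
def ProgSat (P : Prog) (x : ℕ → Bool) (φ : LForm) : Prop :=
  SatGen (fun α => ProgOutputs P α.itv x) x φ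

end CausalSim
namespace CausalSim

/-! ### The canonical program fragment `PL†_{φ,C}` -/

def seqList : List Prog → Prog
  | [] => .empty
  | p :: ps => .seq p (seqList ps)

/-- Listing 1: `IsIntervened(X_i)` (with offset parameter `N`): performs the
toggle check for `X_i`, records the result in `X_{i+N}`, uses `X_{i+2N}` as a
temporary variable, and leaves `X_i` unchanged. -/
def isIntervened (N i : ℕ) : Prog :=
  seqList [
    .assign (.copy (i + N) i),
    .assign (.negcopy i i),
    .assign (.copy (i + 2 * N) i),
    .ite (.eqv (i + 2 * N) (i + N))
      (.assign (.const (i + N) true)) (.assign (.const (i + N) false)),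
    .assign (.negcopy i i)]

/-- One copy of `IsIntervened(X_i)` for each `1 ≤ i ≤ N`. -/
def isIntervenedAll (N : ℕ) : Prog :=
  seqList ((List.range' 1 N).map (isIntervened N))

/-- Listing 2: `HoldsFromIntervention(α)`: the condition checking that exactly
the variables occurring in `α` are marked as intervened and carry the values
specified by `α`'s literals. -/
def holdsFromItv (N : ℕ) (α : Lint) : BTest :=
  ((List.range' 1 N).map fun i =>
    match α.itv i with
    | some b => BTest.and (.eqc i b) (.eqc (i + N) true)
    | none => BTest.eqc (i + N) false).foldr .and (.eqv 0 0)

/-- A sequence of assignment statements. -/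
def assignSeq (l : List BAssign) : Prog := seqList (l.map Prog.assign)

/-- An admissible assignment sequence: assignments only to (pairwise distinct)
variables `X_i` with `1 ≤ i ≤ N`, mentioning only variables of index `≤ N`. -/
def GoodAssigns (N : ℕ) (l : List BAssign) : Prop :=
  (l.map BAssign.target).Nodup ∧ ∀ a ∈ l, a.maxVar ≤ N ∧ 1 ≤ a.target

/-- The admissible bodies of the `if`-statements of a fragment program:
(a) a `choose`-statement with at most `C·|φ|` branches, each an admissible
assignment sequence; (b) a single admissible assignment sequence; or
(c) a single `loop`-statement — with (a) excluded for the deterministic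
dialects and (c) excluded for the halting dialects. -/
def IfBody (C N sz : ℕ) (allowChoose allowLoop : Bool) (p : Prog) : Prop :=
  (allowChoose = true ∧ ∃ branches : List (List BAssign),
      p = .choose (branches.map assignSeq) ∧ branches.length ≤ C * sz ∧
      ∀ l ∈ branches, GoodAssigns N l) ∨
  (∃ l : List BAssign, p = assignSeq l ∧ GoodAssigns N l) ∨
  (allowLoop = true ∧ p = .loop)

/-- Membership in the fragment `PL†_{φ,C}`: one copy of `IsIntervened(X_i)` for
each `1 ≤ i ≤ N`, followed by at most one `if`-statement with condition
`HoldsFromIntervention(α)` for each antecedent `α` occurring in `φ`, with an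
admissible body. -/
def InFrag (C : ℕ) (φ : LForm) (allowChoose allowLoop : Bool) (P : Prog) : Prop :=
  ∃ ifs : List (Lint × Prog),
    (ifs.map Prod.fst).Nodup ∧
    (∀ q ∈ ifs, q.1 ∈ φ.ants ∧ IfBody C φ.maxAtom φ.size allowChoose allowLoop q.2) ∧
    P = .seq (isIntervenedAll φ.maxAtom)
      (seqList (ifs.map fun q => Prog.ite (holdsFromItv φ.maxAtom q.1) q.2 .empty))

/-! ### Encodings into binary strings -/

def encNat (n : ℕ) : List Bool := List.replicate n true ++ [false]

def encListGen (enc : α → List Bool) (l : List α) : List Bool :=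
  encNat l.length ++ l.flatMap enc

def encLit (p : ℕ × Bool) : List Bool := encNat p.1 ++ [p.2]

def encLint (α : Lint) : List Bool := encListGen encLit α.1

def encProp : PropForm → List Bool
  | .atom i => encNat 0 ++ encNat i
  | .neg φ => encNat 1 ++ encProp φ
  | .and φ ψ => encNat 2 ++ encProp φ ++ encProp ψ
  | .or φ ψ => encNat 3 ++ encProp φ ++ encProp ψ

/-- A standard encoding of `L`-formulas as binary strings. -/
def encLForm : LForm → List Bool
  | .atom i => encNat 0 ++ encNat i
  | .cond α β => encNat 1 ++ encLint α ++ encProp β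
  | .neg φ => encNat 2 ++ encLForm φ
  | .and φ ψ => encNat 3 ++ encLForm φ ++ encLForm ψ
  | .or φ ψ => encNat 4 ++ encLForm φ ++ encLForm ψ

def encAssign : BAssign → List Bool
  | .const i c => encNat 0 ++ encNat i ++ [c]
  | .copy i j => encNat 1 ++ encNat i ++ encNat j
  | .negcopy i j => encNat 2 ++ encNat i ++ encNat j

def encTest : BTest → List Bool
  | .eqc i c => encNat 0 ++ encNat i ++ [c]
  | .eqv i j => encNat 1 ++ encNat i ++ encNat j
  | .nev i j => encNat 2 ++ encNat i ++ encNat j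
  | .and t₁ t₂ => encNat 3 ++ encTest t₁ ++ encTest t₂

mutual
  /-- A standard encoding of programs as binary strings. -/
  def encProg : Prog → List Bool
    | .empty => encNat 0
    | .assign a => encNat 1 ++ encAssign a
    | .seq p q => encNat 2 ++ encProg p ++ encProg q
    | .ite c p q => encNat 3 ++ encTest c ++ encProg p ++ encProg q
    | .choose ps => encNat 4 ++ encNat ps.length ++ encProgList ps
    | .loop => encNat 5
  def encProgList : List Prog → List Bool
    | [] => []
    | p :: ps => encProg p ++ encProgList ps
end

/-! ### Polynomial time, NP, and NP-completeness -/

/-- The identity finite encoding of binary strings. -/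
def listBoolFinEncoding : Computability.Encoding (List Bool) Bool where
  encode := id
  decode := fun l => some l
  decode_encode := fun _ => rfl

/-- `f` is computable in polynomial time (by a Turing machine). -/
def PolyTimeFun (f : List Bool → List Bool) : Prop :=
  Nonempty (Turing.TM2ComputableInPolyTime listBoolFinEncoding.encode listBoolFinEncoding.encode f)

/-- Polynomial-time many-one reducibility. -/
def PolyReducible (L₁ L₂ : List Bool → Prop) : Prop :=
  ∃ f : List Bool → List Bool, PolyTimeFun f ∧ ∀ s, L₁ s ↔ L₂ (f s)

/-- A self-delimiting pairing of binary strings. -/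
def encPairStr (a b : List Bool) : List Bool := encNat a.length ++ a ++ b

/-- The class NP, via polynomial-time verifiers of polynomial-length certificates. -/
def InNP (L : List Bool → Prop) : Prop :=
  ∃ (V : List Bool → Bool) (p : Polynomial ℕ),
    PolyTimeFun (fun s => [V s]) ∧
    ∀ s, L s ↔ ∃ w : List Bool, w.length ≤ p.eval s.length ∧ V (encPairStr s w) = true

/-- NP-completeness with respect to polynomial-time many-one reductions. -/
def NPComplete (L : List Bool → Prop) : Prop :=
  InNP L ∧ ∀ L' : List Bool → Prop, InNP L' → PolyReducible L' L

/-- The language Sim-Sat for a class of models: encodings of `L`-formulas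
satisfied by some model in the class. -/
def SimSatLang (cls : CSM → Prop) : List Bool → Prop :=
  fun s => ∃ φ : LForm, s = encLForm φ ∧ ∃ M : CSM, cls M ∧ M.Sat φ

/-! ### Miscellaneous helpers -/

/-- The state description with support the list `xs`. -/
def stateOf (xs : List ℕ) : ℕ → Bool := fun i => decide (i ∈ xs)

theorem finSupp_stateOf (xs : List ℕ) : FinSupp (stateOf xs) := by
  apply Set.Finite.subset (List.finite_toSet xs)
  intro i hi
  simpa [stateOf] using hi

/-- The model given by a machine and (the support of) a state description. -/
def csmOf (T : Machine) (xs : List ℕ) : CSM := ⟨T, stateOf xs, finSupp_stateOf xs⟩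

/-- The singleton intervention `X_n := 1`. -/
def lintSingle (n : ℕ) : Lint := ⟨[(n, true)], List.isChain_singleton _⟩

/-- The set `Ω` of the non-compactness proposition, for `f : ℕ → ℕ`. -/
def Omega (f : ℕ → ℕ) : Set LForm :=
  {ψ | ∃ n, ψ = LForm.neg (.atom n)} ∪
  {ψ | ∃ n, ψ = LForm.dia (lintSingle n) (.atom (f n))} ∪
  {ψ | ∃ n m, m ≠ n ∧ m ≠ f n ∧ ψ = LForm.cond (lintSingle n) (.neg (.atom m))}

end CausalSim

namespace CausalSim

/-! Part 1: generic derivation helpers -/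

theorem taut_imp_intro {χ φ : LForm}
    (h : ∀ v w, χ.evalA v w = true → φ.evalA v w = true) :
    Tautology (χ.imp φ) := by
  intro v w
  simp only [LForm.imp, LForm.evalA]
  cases hc : χ.evalA v w
  · simp
  · simp [h v w hc]

theorem Deriv.mp' {e : LForm → Prop} {χ φ : LForm} (h1 : Deriv e χ)
    (h : ∀ v w, χ.evalA v w = true → φ.evalA v w = true) : Deriv e φ :=
  (Deriv.taut (taut_imp_intro h)).mp h1


theorem deriv_of_tautcons {e : LForm → Prop} :
    ∀ (Γ : List LForm) (φ : LForm), (∀ χ ∈ Γ, Deriv e χ) →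
    (∀ v w, (∀ χ ∈ Γ, χ.evalA v w = true) → φ.evalA v w = true) → Deriv e φ := by
  intro Γ
  induction Γ with
  | nil => intro φ _ h; exact Deriv.taut (fun v w => h v w (by simp))
  | cons χ Γ ih =>
      intro φ hd h
      have h1 : Deriv e (χ.imp φ) := by
        apply ih _ (fun χ' hχ' => hd χ' (List.mem_cons_of_mem _ hχ'))
        intro v w hΓ
        simp only [LForm.imp, LForm.evalA]
        cases hc : χ.evalA v w
        · simp
        · simp only [Bool.not_true, Bool.false_or]
          apply h v w
          intro χ' hχ'
          rcases List.mem_cons.1 hχ' with rfl | hm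
          · exact hc
          · exact hΓ _ hm
      exact h1.mp (hd χ (List.mem_cons_self))

theorem deriv_tc2 {e : LForm → Prop} {χ₁ χ₂ φ : LForm}
    (h1 : Deriv e χ₁) (h2 : Deriv e χ₂)
    (h : ∀ v w, χ₁.evalA v w = true → χ₂.evalA v w = true → φ.evalA v w = true) :
    Deriv e φ := by
  apply deriv_of_tautcons [χ₁, χ₂]
  · intro χ hχ
    rcases List.mem_cons.1 hχ with rfl | hχ
    · exact h1
    · rcases List.mem_cons.1 hχ with rfl | hχ
      · exact h2
      · simp at hχ
  · intro v w hΓ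
    exact h v w (hΓ _ (by simp)) (hΓ _ (by simp))

end CausalSim

namespace CausalSim

/-! Part 2: evaluation lemmas -/

theorem evalA_toL (β : PropForm) (v : ℕ → Bool) (w : Lint → PropForm → Bool) :
    β.toL.evalA v w = β.eval v := by
  induction β with
  | atom i => rfl
  | neg φ ih => simp [PropForm.toL, LForm.evalA, PropForm.eval, ih]
  | and φ ψ ih1 ih2 => simp [PropForm.toL, LForm.evalA, PropForm.eval, ih1, ih2]
  | or φ ψ ih1 ih2 => simp [PropForm.toL, LForm.evalA, PropForm.eval, ih1, ih2]

theorem eval_top (v : ℕ → Bool) : PropForm.top.eval v = true := by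
  simp [PropForm.top, PropForm.bot, PropForm.eval]

theorem eval_imp (β γ : PropForm) (v : ℕ → Bool) :
    (β.imp γ).eval v = (!(β.eval v) || γ.eval v) := rfl

/-- `myAndL`: conjunction of a list of `L`-formulas. -/
def myAndL (l : List LForm) : LForm := l.foldr .and PropForm.top.toL

theorem evalA_myAndL (l : List LForm) (v w) :
    (myAndL l).evalA v w = true ↔ ∀ χ ∈ l, χ.evalA v w = true := by
  induction l with
  | nil => simp [myAndL, evalA_toL, eval_top]
  | cons χ l ih =>
      simp only [myAndL, List.foldr_cons, LForm.evalA, Bool.and_eq_true]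
      rw [show (List.foldr LForm.and PropForm.top.toL l) = myAndL l from rfl, ih]
      simp

/-- `impAll Γ φ`: the curried implication `χ₁ → (χ₂ → ⋯ → φ)`. -/
def impAll (Γ : List LForm) (φ : LForm) : LForm := Γ.foldr .imp φ

theorem evalA_impAll (Γ : List LForm) (φ : LForm) (v w) :
    (impAll Γ φ).evalA v w = true ↔
      ((∀ χ ∈ Γ, χ.evalA v w = true) → φ.evalA v w = true) := by
  induction Γ with
  | nil => simp [impAll]
  | cons χ Γ ih =>
      simp only [impAll, List.foldr_cons, LForm.imp, LForm.evalA]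
      rw [show (List.foldr LForm.imp φ Γ) = impAll Γ φ from rfl]
      cases hc : χ.evalA v w
      · simp only [Bool.not_false, Bool.true_or]
        constructor
        · intro _ hall
          exact absurd (hall χ (List.mem_cons_self)) (by simp [hc])
        · intro _; trivial
      · simp only [Bool.not_true, Bool.false_or, ih]
        constructor
        · intro h hall
          exact h fun χ' h' => hall χ' (List.mem_cons_of_mem _ h')
        · intro h hall
          apply h
          intro χ' h'
          rcases List.mem_cons.1 h' with rfl | h'
          · exact hc
          · exact hall _ h'

/-- Evaluation depends only on atoms up to `maxAtom`. -/
theorem eval_congr (β : PropForm) (v v' : ℕ → Bool)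
    (h : ∀ i ≤ β.maxAtom, v i = v' i) : β.eval v = β.eval v' := by
  induction β with
  | atom i => exact h i le_rfl
  | neg φ ih => simp [PropForm.eval, PropForm.maxAtom] at *; rw [ih h]
  | and φ ψ ih1 ih2 =>
      simp only [PropForm.eval, PropForm.maxAtom] at *
      rw [ih1 (fun i hi => h i (le_trans hi (le_max_left _ _))),
        ih2 (fun i hi => h i (le_trans hi (le_max_right _ _)))]
  | or φ ψ ih1 ih2 =>
      simp only [PropForm.eval, PropForm.maxAtom] at *
      rw [ih1 (fun i hi => h i (le_trans hi (le_max_left _ _))),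
        ih2 (fun i hi => h i (le_trans hi (le_max_right _ _)))]

/-! Lint lemmas -/

instance : IsTrans (ℕ × Bool) (fun p q => p.1 < q.1) := ⟨fun _ _ _ => lt_trans⟩

theorem lint_keys_lt (α : Lint) : α.1.Pairwise (fun p q => p.1 < q.1) :=
  List.isChain_iff_pairwise.1 α.2

theorem lint_itv_some_iff (α : Lint) (i : ℕ) (b : Bool) :
    α.itv i = some b ↔ (i, b) ∈ α.1 := by
  constructor
  · intro h
    simp only [Lint.itv, Option.map_eq_some_iff] at h
    obtain ⟨p, hp, hb⟩ := h
    have hm := List.mem_of_find?_eq_some hp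
    have hk := List.find?_some hp
    simp at hk
    subst hb hk
    exact hm
  · intro h
    simp only [Lint.itv, Option.map_eq_some_iff]
    have : ∃ p, α.1.find? (fun p => p.1 == i) = some p := by
      rw [← Option.isSome_iff_exists, List.find?_isSome]
      exact ⟨(i, b), h, by simp⟩
    obtain ⟨p, hp⟩ := this
    refine ⟨p, hp, ?_⟩
    have hm := List.mem_of_find?_eq_some hp
    have hk := List.find?_some hp
    simp at hk
    -- p.1 = i; keys are pairwise distinct so p = (i, b)
    have hnd : (α.1.map Prod.fst).Nodup :=
      List.Pairwise.map _ (fun a b hab => Nat.ne_of_lt hab) (lint_keys_lt α)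
    have : p = (i, b) := by
      apply List.inj_on_of_nodup_map hnd hm h
      simp [hk]
    rw [this]

theorem lint_keys_nodup (α : Lint) : (α.1.map Prod.fst).Nodup :=
  List.Pairwise.map _ (fun a b hab => Nat.ne_of_lt hab) (lint_keys_lt α)

theorem lint_itv_none_iff (α : Lint) (i : ℕ) :
    α.itv i = none ↔ ∀ b, (i, b) ∉ α.1 := by
  constructor
  · intro h b hb
    rw [← lint_itv_some_iff] at hb
    rw [h] at hb; cases hb
  · intro h
    cases hα : α.itv i with
    | none => rfl
    | some b => exact absurd ((lint_itv_some_iff α i b).1 hα) (h b)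

theorem lint_maxAtom_mem (α : Lint) (p : ℕ × Bool) (hp : p ∈ α.1) :
    p.1 ≤ α.maxAtom := by
  have : p.1 ∈ α.1.map Prod.fst := List.mem_map_of_mem hp
  unfold Lint.maxAtom
  generalize α.1.map Prod.fst = l at this ⊢
  induction l with
  | nil => cases this
  | cons a l ih =>
      rcases List.mem_cons.1 this with rfl | hm
      · exact le_max_left _ _
      · exact le_trans (ih hm) (le_max_right _ _)

theorem lint_itv_none_of_gt (α : Lint) (i : ℕ) (h : α.maxAtom < i) :
    α.itv i = none := by
  rw [lint_itv_none_iff]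
  intro b hb
  exact absurd (lint_maxAtom_mem α _ hb) (by omega)

/-- Strictly key-sorted lists with identical members are equal. -/
theorem sorted_ext : ∀ (l₁ l₂ : List (ℕ × Bool)),
    l₁.Pairwise (fun p q => p.1 < q.1) → l₂.Pairwise (fun p q => p.1 < q.1) →
    (∀ p, p ∈ l₁ ↔ p ∈ l₂) → l₁ = l₂ := by
  intro l₁
  induction l₁ with
  | nil =>
      intro l₂ _ _ h
      cases l₂ with
      | nil => rfl
      | cons q l₂ => exact absurd ((h q).2 (List.mem_cons_self)) (by simp)
  | cons p l₁ ih =>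
      intro l₂ h₁ h₂ h
      cases l₂ with
      | nil => exact absurd ((h p).1 (List.mem_cons_self)) (by simp)
      | cons q l₂ =>
          have hpl : ∀ x ∈ l₁, p.1 < x.1 := fun x hx => (List.pairwise_cons.1 h₁).1 x hx
          have hql : ∀ x ∈ l₂, q.1 < x.1 := fun x hx => (List.pairwise_cons.1 h₂).1 x hx
          have hpq : p = q := by
            rcases List.mem_cons.1 ((h p).1 (List.mem_cons_self)) with h' | h'
            · exact h'
            · rcases List.mem_cons.1 ((h q).2 (List.mem_cons_self)) with h'' | h''
              · exact h''.symm
              · exact absurd (lt_trans (hql p h') (hpl q h'')) (lt_irrefl _)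
          subst hpq
          have : l₁ = l₂ := by
            apply ih l₂ (List.pairwise_cons.1 h₁).2 (List.pairwise_cons.1 h₂).2
            intro x
            constructor
            · intro hx
              rcases List.mem_cons.1 ((h x).1 (List.mem_cons_of_mem _ hx)) with rfl | hx'
              · exact absurd (hpl x hx) (lt_irrefl _)
              · exact hx'
            · intro hx
              rcases List.mem_cons.1 ((h x).2 (List.mem_cons_of_mem _ hx)) with rfl | hx'
              · exact absurd (hql x hx) (lt_irrefl _)
              · exact hx'
          rw [this]

/-- `Lint.itv` is injective. -/
theorem lint_itv_inj (α α' : Lint) (h : ∀ i, α.itv i = α'.itv i) : α = α' := by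
  apply Subtype.ext
  apply sorted_ext _ _ (lint_keys_lt α) (lint_keys_lt α')
  intro p
  rw [← lint_itv_some_iff, ← lint_itv_some_iff, h]

/-- `Models y α`: `y` satisfies the intervention `α`. -/
def Models (y : ℕ → Bool) (α : Lint) : Prop := ∀ i b, α.itv i = some b → y i = b

theorem eval_lit (p : ℕ × Bool) (y : ℕ → Bool) :
    (PropForm.lit p).eval y = true ↔ y p.1 = p.2 := by
  cases hb : p.2 <;> simp [PropForm.lit, hb, PropForm.eval]

theorem eval_toProp (α : Lint) (y : ℕ → Bool) :
    α.toProp.eval y = true ↔ Models y α := by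
  have main : α.toProp.eval y = true ↔ ∀ p ∈ α.1, y p.1 = p.2 := by
    unfold Lint.toProp
    cases hl : α.1 with
    | nil => simp [eval_top]
    | cons p rest =>
        have gen : ∀ (l : List (ℕ × Bool)) (acc : PropForm),
            (l.foldl (fun acc q => acc.and (.lit q)) acc).eval y = true ↔
            (acc.eval y = true ∧ ∀ q ∈ l, y q.1 = q.2) := by
          intro l
          induction l with
          | nil => simp
          | cons q l ih =>
              intro acc
              rw [List.foldl_cons, ih]
              simp [PropForm.eval, eval_lit]
              tauto
        rw [gen, eval_lit]
        simp
  rw [main]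
  unfold Models
  constructor
  · intro h i b hib
    exact h (i, b) ((lint_itv_some_iff α i b).1 hib)
  · intro h p hp
    exact h p.1 p.2 ((lint_itv_some_iff α p.1 p.2).2 hp)

end CausalSim

namespace CausalSim

/-! Part 3: the propositional-coherence lemma (Lemma A) -/

theorem deriv_box_of_taut {e : LForm → Prop} (α : Lint) (g : PropForm)
    (h : ∀ y, g.eval y = true) : Deriv e (.cond α g) := by
  have hrw : Deriv e ((LForm.cond α α.toProp).imp (.cond α g)) := by
    apply Deriv.rw
    apply Deriv.taut
    intro v w
    rw [evalA_toL, eval_imp, h]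
    simp
  exact hrw.mp (Deriv.axR α)

theorem boxListImp {e : LForm → Prop} (α : Lint) :
    ∀ (L : List PropForm) (g : PropForm),
    (∀ y, (∀ ℓ ∈ L, ℓ.eval y = true) → g.eval y = true) →
    Deriv e (impAll (L.map (.cond α ·)) (.cond α g)) := by
  intro L
  induction L with
  | nil =>
      intro g h
      exact deriv_box_of_taut α g (fun y => h y (by simp))
  | cons ℓ L ih =>
      intro g h
      have h' : ∀ y, (∀ ℓ' ∈ L, ℓ'.eval y = true) → (ℓ.imp g).eval y = true := by
        intro y hy
        rw [eval_imp]
        cases he : ℓ.eval y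
        · simp
        · simp only [Bool.not_true, Bool.false_or]
          apply h
          intro ℓ' h'
          rcases List.mem_cons.1 h' with rfl | h'
          · exact he
          · exact hy _ h'
      have hIH := ih (ℓ.imp g) h'
      have hK := Deriv.axK (extra := e) α ℓ g
      apply deriv_tc2 hIH hK
      intro v w h1 h2
      simp only [List.map_cons]
      rw [evalA_impAll] at h1 ⊢
      simp only [LForm.imp, LForm.evalA] at h2
      intro hall
      have hcℓ : (LForm.cond α ℓ).evalA v w = true := hall _ (List.mem_cons_self)
      have hrest : ∀ χ ∈ L.map (LForm.cond α ·), χ.evalA v w = true :=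
        fun χ hχ => hall _ (List.mem_cons_of_mem _ hχ)
      have := h1 hrest
      simp only [LForm.evalA] at this hcℓ ⊢
      rw [this, hcℓ] at h2
      simpa using h2

/-- The pattern formula for antecedent `α`, boxes `B`, positive part `Ssub`. -/
def pat (α : Lint) (B Ssub : List PropForm) : LForm :=
  myAndL (Ssub.map (.cond α ·) ++ (B.filter (· ∉ Ssub)).map (fun β => .neg (.cond α β)))

theorem evalA_pat (α : Lint) (B Ssub : List PropForm) (v w) :
    (pat α B Ssub).evalA v w = true ↔
      ((∀ β ∈ Ssub, w α β = true) ∧ ∀ β ∈ B, β ∉ Ssub → w α β = false) := by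
  rw [pat, evalA_myAndL]
  constructor
  · intro h
    constructor
    · intro β hβ
      exact h _ (List.mem_append_left _ (List.mem_map_of_mem hβ))
    · intro β hβ hβs
      have := h (LForm.neg (.cond α β))
        (List.mem_append_right _ (List.mem_map_of_mem (by simp [List.mem_filter, hβ, hβs])))
      simp only [LForm.evalA, Bool.not_eq_true'] at this
      exact this
  · intro ⟨h1, h2⟩ χ hχ
    rcases List.mem_append.1 hχ with hχ | hχ
    · obtain ⟨β, hβ, rfl⟩ := List.mem_map.1 hχ
      exact h1 β hβ
    · obtain ⟨β, hβ, rfl⟩ := List.mem_map.1 hχ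
      rw [List.mem_filter] at hβ
      have := h2 β hβ.1 (by simpa using hβ.2)
      simp [LForm.evalA, this]

theorem derivNegPat (α : Lint) (B Ssub : List PropForm) (β₀ : PropForm)
    (h0 : β₀ ∈ B) (h1 : β₀ ∉ Ssub)
    (hunsat : ∀ y : ℕ → Bool, α.toProp.eval y = true →
      (∀ β ∈ Ssub, β.eval y = true) → (∀ β ∈ B, β ∉ Ssub → β.eval y = false) → False) :
    Deriv axF (.neg (pat α B Ssub)) := by
  classical
  set Bneg := (B.filter (· ∉ Ssub)) with hBneg
  set L : List PropForm := α.toProp :: (Ssub ++ Bneg.map .neg) with hL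
  have hcons : ∀ y, (∀ ℓ ∈ L, ℓ.eval y = true) → β₀.eval y = true := by
    intro y hy
    exfalso
    apply hunsat y (hy _ (List.mem_cons_self))
    · intro β hβ
      exact hy _ (List.mem_cons_of_mem _ (List.mem_append_left _ hβ))
    · intro β hβ hβs
      have := hy (PropForm.neg β)
        (List.mem_cons_of_mem _ (List.mem_append_right _
          (List.mem_map_of_mem (by simp [hBneg, List.mem_filter, hβ, hβs]))))
      simpa [PropForm.eval] using this
  have hchain := boxListImp (e := axF) α L β₀ hcons
  -- Γ: the chain, axR, and the F-instances
  set Γ : List LForm := impAll (L.map (.cond α ·)) (.cond α β₀) :: (LForm.cond α α.toProp) ::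
    (Bneg.map fun β => (LForm.dia α β).imp (.cond α β)) with hΓ
  apply deriv_of_tautcons Γ
  · intro χ hχ
    rcases List.mem_cons.1 hχ with rfl | hχ
    · exact hchain
    · rcases List.mem_cons.1 hχ with rfl | hχ
      · exact Deriv.axR α
      · obtain ⟨β, _, rfl⟩ := List.mem_map.1 hχ
        exact Deriv.extra ⟨α, β, rfl⟩
  · intro v w hΓt
    simp only [LForm.evalA, Bool.not_eq_true']
    rw [← Bool.not_eq_true]
    intro hpat
    rw [evalA_pat] at hpat
    obtain ⟨hpos, hneg⟩ := hpat
    have hchainT := hΓt _ (List.mem_cons_self)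
    rw [evalA_impAll] at hchainT
    have hβ₀ : (LForm.cond α β₀).evalA v w = true := by
      apply hchainT
      intro χ hχ
      obtain ⟨ℓ, hℓ, rfl⟩ := List.mem_map.1 hχ
      rcases List.mem_cons.1 hℓ with rfl | hℓ
      · exact hΓt _ (List.mem_cons_of_mem _ (List.mem_cons_self))
      · rcases List.mem_append.1 hℓ with hℓ | hℓ
        · exact hpos _ hℓ
        · obtain ⟨β, hβ, rfl⟩ := List.mem_map.1 hℓ
          -- from the F-instance for β and w α β = false
          have hF := hΓt ((LForm.dia α β).imp (.cond α β))
            (List.mem_cons_of_mem _ (List.mem_cons_of_mem _ (List.mem_map_of_mem hβ)))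
          rw [List.mem_filter] at hβ
          have hwβ : w α β = false := hneg β hβ.1 (by simpa using hβ.2)
          simp only [LForm.imp, LForm.dia, LForm.evalA, hwβ] at hF ⊢
          simpa using hF
    have hwβ₀ : w α β₀ = false := hneg β₀ h0 h1
    simp only [LForm.evalA, hwβ₀] at hβ₀
    cases hβ₀

end CausalSim

namespace CausalSim

/-! Part 4: Lemma A -/

/-- The conditionals occurring in an `L`-formula. -/
def condsOf : LForm → List (Lint × PropForm)
  | .atom _ => []
  | .cond α β => [(α, β)]
  | .neg φ => condsOf φ
  | .and φ ψ => condsOf φ ++ condsOf ψ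
  | .or φ ψ => condsOf φ ++ condsOf ψ

theorem mem_ants_of_mem_condsOf {φ : LForm} {p : Lint × PropForm} (h : p ∈ condsOf φ) :
    p.1 ∈ φ.ants := by
  induction φ with
  | atom i => cases h
  | cond α β => simp [condsOf] at h; simp [LForm.ants, h]
  | neg φ ih => exact ih h
  | and φ ψ ih1 ih2 =>
      rcases List.mem_append.1 h with h | h
      · exact List.mem_append_left _ (ih1 h)
      · exact List.mem_append_right _ (ih2 h)
  | or φ ψ ih1 ih2 =>
      rcases List.mem_append.1 h with h | h
      · exact List.mem_append_left _ (ih1 h)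
      · exact List.mem_append_right _ (ih2 h)

theorem maxAtom_of_mem_condsOf {φ : LForm} {p : Lint × PropForm} (h : p ∈ condsOf φ) :
    p.1.maxAtom ≤ φ.maxAtom ∧ p.2.maxAtom ≤ φ.maxAtom := by
  induction φ with
  | atom i => cases h
  | cond α β =>
      simp [condsOf] at h
      subst h
      exact ⟨le_max_left _ _, le_max_right _ _⟩
  | neg φ ih => exact ih h
  | and φ ψ ih1 ih2 =>
      rcases List.mem_append.1 h with h | h
      · exact ⟨le_trans (ih1 h).1 (le_max_left _ _), le_trans (ih1 h).2 (le_max_left _ _)⟩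
      · exact ⟨le_trans (ih2 h).1 (le_max_right _ _), le_trans (ih2 h).2 (le_max_right _ _)⟩
  | or φ ψ ih1 ih2 =>
      rcases List.mem_append.1 h with h | h
      · exact ⟨le_trans (ih1 h).1 (le_max_left _ _), le_trans (ih1 h).2 (le_max_left _ _)⟩
      · exact ⟨le_trans (ih2 h).1 (le_max_right _ _), le_trans (ih2 h).2 (le_max_right _ _)⟩

theorem maxAtom_of_mem_ants {φ : LForm} {α : Lint} (h : α ∈ φ.ants) :
    α.maxAtom ≤ φ.maxAtom := by
  induction φ with
  | atom i => cases h
  | cond α' β => simp [LForm.ants] at h; subst h; exact le_max_left _ _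
  | neg φ ih => exact ih h
  | and φ ψ ih1 ih2 =>
      rcases List.mem_append.1 h with h | h
      · exact le_trans (ih1 h) (le_max_left _ _)
      · exact le_trans (ih2 h) (le_max_right _ _)
  | or φ ψ ih1 ih2 =>
      rcases List.mem_append.1 h with h | h
      · exact le_trans (ih1 h) (le_max_left _ _)
      · exact le_trans (ih2 h) (le_max_right _ _)

/-- The consequents paired with `α` in `φ`. -/
def Bpsi (ψ : LForm) (α : Lint) : List PropForm :=
  (condsOf ψ).filterMap (fun p => if p.1 = α then some p.2 else none)

theorem mem_Bpsi {ψ : LForm} {α : Lint} {β : PropForm} :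
    β ∈ Bpsi ψ α ↔ (α, β) ∈ condsOf ψ := by
  simp only [Bpsi, List.mem_filterMap]
  constructor
  · rintro ⟨p, hp, h⟩
    by_cases h1 : p.1 = α
    · simp [h1] at h
      have : p = (α, β) := Prod.ext h1 h
      rwa [this] at hp
    · simp [h1] at h
  · intro h
    exact ⟨(α, β), h, by simp⟩

/-- Coherence of `w` at `α` over the consequent list `B`. -/
def Coh (α : Lint) (B : List PropForm) (w : Lint → PropForm → Bool) : Prop :=
  (∀ β ∈ B, w α β = true) ∨ ∃ y, Models y α ∧ ∀ β ∈ B, w α β = β.eval y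

/-- Lemma A: a consistent formula has a coherent propositional valuation. -/
theorem lemA {ψ : LForm} (hcons : ¬ Deriv axF (.neg ψ)) :
    ∃ v w, ψ.evalA v w = true ∧ ∀ α ∈ ψ.ants, Coh α (Bpsi ψ α) w := by
  classical
  by_contra hno
  push_neg at hno
  apply hcons
  -- the list of refuted bad patterns
  set P : List (Lint × List PropForm) :=
    (ψ.ants.flatMap fun α => (Bpsi ψ α).sublists.map fun S => (α, S)) with hP
  set Bad : Lint × List PropForm → Prop := fun p =>
    ¬((∀ β ∈ Bpsi ψ p.1, β ∈ p.2) ∨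
      ∃ y, Models y p.1 ∧ ∀ β ∈ Bpsi ψ p.1, (β.eval y = true ↔ β ∈ p.2)) with hBad
  set Χ : List LForm :=
    (P.filter fun p => decide (Bad p)).map fun p => LForm.neg (pat p.1 (Bpsi ψ p.1) p.2)
    with hΧ
  apply deriv_of_tautcons Χ
  · -- each member of Χ is derivable
    intro χ hχ
    rw [hΧ] at hχ
    obtain ⟨p, hp, rfl⟩ := List.mem_map.1 hχ
    rw [List.mem_filter, decide_eq_true_iff] at hp
    obtain ⟨hpP, hbad⟩ := hp
    rw [hBad] at hbad
    push_neg at hbad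
    obtain ⟨hnd1, hnd2⟩ := hbad
    obtain ⟨β₀, hβ₀B, hβ₀S⟩ := hnd1
    -- Ssub ⊆ B: elements of p.2 are in Bpsi ψ p.1
    have hsub : ∀ β ∈ p.2, β ∈ Bpsi ψ p.1 := by
      rw [hP] at hpP
      simp only [List.mem_flatMap, List.mem_map] at hpP
      obtain ⟨α, hα, S, hS, hpe⟩ := hpP
      cases hpe
      intro β hβ
      exact (List.mem_sublists.1 hS).subset hβ
    apply derivNegPat p.1 (Bpsi ψ p.1) p.2 β₀ hβ₀B hβ₀S
    intro y hyα hyS hyB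
    obtain ⟨β, hβ, hiff⟩ := hnd2 y ((eval_toProp _ _).1 hyα)
    rcases hiff with ⟨h1, h2⟩ | ⟨h1, h2⟩
    · rw [hyB β hβ h2] at h1; cases h1
    · exact h1 (hyS β h2)
  · -- Χ tautologically implies ¬ψ
    intro v w hΧt
    simp only [LForm.evalA, Bool.not_eq_true']
    by_contra hψt
    rw [Bool.not_eq_false] at hψt
    obtain ⟨α, hα, hncoh⟩ := hno v w hψt
    set B := Bpsi ψ α with hB
    set Ssub := B.filter (fun β => w α β) with hS
    rw [Coh] at hncoh
    push_neg at hncoh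
    have hbad : Bad (α, Ssub) := by
      rw [hBad]
      rintro (hall | ⟨y, hy, hiff⟩)
      · obtain ⟨β, hβ, hwβ⟩ := hncoh.1
        have := hall β hβ
        rw [hS] at this
        simp only [List.mem_filter] at this
        exact hwβ (by simpa using this.2)
      · obtain ⟨β, hβ, hne⟩ := hncoh.2 y hy
        apply hne
        have h2 := hiff β hβ
        rw [hS] at h2
        simp only [List.mem_filter, hβ, true_and] at h2
        cases hw : w α β
        · cases he : β.eval y
          · rfl
          · exfalso; rw [hw, he] at h2; simp at h2
        · cases he : β.eval y
          · exfalso; rw [hw, he] at h2; simp at h2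
          · rfl
    have hmem : LForm.neg (pat α B Ssub) ∈ Χ := by
      rw [hΧ]
      refine List.mem_map.2 ⟨(α, Ssub), ?_, rfl⟩
      rw [List.mem_filter, decide_eq_true_iff]
      refine ⟨?_, hbad⟩
      rw [hP]
      simp only [List.mem_flatMap, List.mem_map]
      exact ⟨α, hα, ⟨Ssub, List.mem_sublists.2 (by rw [hS, hB]; exact List.filter_sublist), rfl⟩⟩
    have hXt := hΧt _ hmem
    simp only [LForm.evalA, Bool.not_eq_true'] at hXt
    have hp : (pat α B Ssub).evalA v w = true := by
      rw [evalA_pat]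
      constructor
      · intro β hβ
        rw [hS] at hβ
        simpa using (List.mem_filter.1 hβ).2
      · intro β hβ hβs
        cases hw : w α β
        · rfl
        · exact absurd (by rw [hS]; exact List.mem_filter.2 ⟨hβ, by simp [hw]⟩) hβs
    rw [hXt] at hp; cases hp

end CausalSim

namespace CausalSim

/-! Part 5: machines given by a partial step function -/

def mkMachine (E : ℕ) (δ : ℕ → Bool → Option (ℕ × Bool × Bool)) : Machine :=
  ((List.range E).product [false, true]).filterMap
    fun qt => (δ qt.1 qt.2).map fun v => (qt, v)

theorem mem_mkMachine {E δ} {r : Rule} :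
    r ∈ mkMachine E δ ↔ r.1.1 < E ∧ δ r.1.1 r.1.2 = some r.2 := by
  simp only [mkMachine, List.mem_filterMap]
  constructor
  · rintro ⟨qt, hqt, h⟩
    obtain ⟨q, t⟩ := qt
    rcases hδ : δ q t with _ | v
    · rw [hδ] at h; cases h
    · rw [hδ] at h
      simp only [Option.map_some, Option.some_inj] at h
      subst h
      have := (List.pair_mem_product.1 hqt).1
      exact ⟨by simpa using this, hδ⟩
  · rintro ⟨h1, h2⟩
    refine ⟨r.1, ?_, by rw [h2]; rfl⟩
    have : r.1 = (r.1.1, r.1.2) := rfl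
    rw [this]
    apply List.pair_mem_product.2
    refine ⟨by simpa using h1, by cases r.1.2 <;> simp⟩

theorem mkMachine_det (E δ) : (mkMachine E δ).Det := by
  intro r₁ h₁ r₂ h₂ hkey
  rw [mem_mkMachine] at h₁ h₂
  have := h₁.2
  rw [hkey] at this
  rw [this] at h₂
  have := h₂.2
  simp only [Option.some_inj] at this
  exact Prod.ext hkey this

/-- The deterministic step of `mkMachine` as a partial function on configurations. -/
def stepF (E : ℕ) (δ : ℕ → Bool → Option (ℕ × Bool × Bool)) (itv : ℕ → Option Bool)
    (c : Cfg) : Option Cfg :=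
  if c.q < E then
    (δ c.q (c.tape c.pos)).map
      fun v => ⟨v.1, movePos c.pos v.2.2, writeTape itv c.tape c.pos v.2.1⟩
  else none

theorem mstep_iff {E δ itv c c'} :
    MStep (mkMachine E δ) itv c c' ↔ stepF E δ itv c = some c' := by
  constructor
  · rintro ⟨r, hr, hkey, rfl⟩
    rw [mem_mkMachine] at hr
    have h1 : r.1.1 = c.q := by rw [hkey]
    have h2 : r.1.2 = c.tape c.pos := by rw [hkey]
    rw [stepF, if_pos (h1 ▸ hr.1)]
    rw [← h1, ← h2, hr.2]
    rfl
  · intro h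
    rw [stepF] at h
    split at h
    · rcases hδ : δ c.q (c.tape c.pos) with _ | v
      · rw [hδ] at h; cases h
      · rw [hδ] at h
        simp only [Option.map_some, Option.some_inj] at h
        refine ⟨((c.q, c.tape c.pos), v), ?_, rfl, h.symm⟩
        rw [mem_mkMachine]
        exact ⟨by assumption, hδ⟩
    · cases h

theorem halted_iff {E δ itv c} :
    Halted (mkMachine E δ) c ↔ stepF E δ itv c = none := by
  constructor
  · intro h
    rw [stepF]
    split
    · rcases hδ : δ c.q (c.tape c.pos) with _ | v
      · simp
      · exact absurd rfl (h ((c.q, c.tape c.pos), v)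
          (mem_mkMachine.2 ⟨by assumption, hδ⟩))
    · rfl
  · intro h r hr hkey
    rw [mem_mkMachine] at hr
    rw [stepF] at h
    rw [hkey] at hr
    rw [if_pos hr.1, hr.2] at h
    cases h

/-- Determinism: if `b` is reachable and `c` is a reachable halting configuration,
then `c` is reachable from `b`. -/
theorem reach_halt {E δ itv} :
    ∀ a b : Cfg, Relation.ReflTransGen (MStep (mkMachine E δ) itv) a b →
    ∀ c, Relation.ReflTransGen (MStep (mkMachine E δ) itv) a c →
    stepF E δ itv c = none →
    Relation.ReflTransGen (MStep (mkMachine E δ) itv) b c := by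
  intro a b hab
  induction hab using Relation.ReflTransGen.head_induction_on with
  | refl => intro c hac _; exact hac
  | head hstep _ ih =>
      rename_i a₁ a₂ _
      intro c hac hc
      rcases Relation.ReflTransGen.cases_head hac with rfl | ⟨d, hd, hdc⟩
      · rw [mstep_iff] at hstep
        rw [hstep] at hc; cases hc
      · have : a₂ = d := by
          rw [mstep_iff] at hstep hd
          rw [hstep] at hd
          exact Option.some_inj.1 hd
        subst this
        exact ih c hdc hc

theorem outputs_singleton {E δ itv x} {h : Cfg}
    (hreach : Relation.ReflTransGen (MStep (mkMachine E δ) itv) ⟨0, 0, initTape itv x⟩ h)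
    (hhalt : stepF E δ itv h = none) :
    Outputs (mkMachine E δ) itv x = {h.tape} := by
  ext y
  simp only [Outputs, Set.mem_setOf_eq, Set.mem_singleton_iff]
  constructor
  · rintro ⟨c, hc, hch, rfl⟩
    have := reach_halt _ h hreach c hc ((halted_iff).1 hch)
    rcases Relation.ReflTransGen.cases_head this with rfl | ⟨d, hd, _⟩
    · rfl
    · rw [mstep_iff, hhalt] at hd; cases hd
  · rintro rfl
    exact ⟨h, hreach, (halted_iff (itv := itv)).2 hhalt, rfl⟩

theorem outputs_empty {E δ itv x} {c₀ : Cfg}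
    (hreach : Relation.ReflTransGen (MStep (mkMachine E δ) itv) ⟨0, 0, initTape itv x⟩ c₀)
    (P : Cfg → Prop) (hP₀ : P c₀)
    (hstep : ∀ c c', P c → MStep (mkMachine E δ) itv c c' → P c')
    (hnh : ∀ c, P c → stepF E δ itv c ≠ none) :
    Outputs (mkMachine E δ) itv x = ∅ := by
  ext y
  simp only [Outputs, Set.mem_setOf_eq, Set.mem_empty_iff_false, iff_false]
  rintro ⟨c, hc, hch, rfl⟩
  have hreach' := reach_halt _ c₀ hreach c hc ((halted_iff).1 hch)
  have hPc : P c := by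
    clear hc hch
    induction hreach' with
    | refl => exact hP₀
    | tail h hs ih => exact hstep _ _ ih hs
  exact hnh c hPc ((halted_iff (itv := itv)).1 hch)

end CausalSim

namespace CausalSim

/-! Part 6: the detection machine -/

/-- Abstract states of the detection machine. -/
inductive MSt : Type
  | scanA (i c : ℕ)
  | scanB (i c : ℕ) (t : Bool)
  | scanC (i c : ℕ) (t : Bool)
  | wr (k j : ℕ)
  | lp
  | hl

namespace MSt

/-- Encoding of states as naturals. -/
def e : MSt → ℕ
  | scanA i c => 6 * Nat.pair i c
  | scanB i c t => 6 * Nat.pair (Nat.pair i c) (cond t 1 0) + 1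
  | scanC i c t => 6 * Nat.pair (Nat.pair i c) (cond t 1 0) + 2
  | wr k j => 6 * Nat.pair k j + 3
  | lp => 4
  | hl => 5

def dec (q : ℕ) : MSt :=
  match q % 6 with
  | 0 => scanA (q / 6).unpair.1 (q / 6).unpair.2
  | 1 => scanB ((q / 6).unpair.1).unpair.1 ((q / 6).unpair.1).unpair.2 ((q / 6).unpair.2 == 1)
  | 2 => scanC ((q / 6).unpair.1).unpair.1 ((q / 6).unpair.1).unpair.2 ((q / 6).unpair.2 == 1)
  | 3 => wr (q / 6).unpair.1 (q / 6).unpair.2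
  | 4 => lp
  | _ => hl

theorem dec_e (s : MSt) : dec (e s) = s := by
  cases s with
  | scanA i c =>
      show dec (6 * Nat.pair i c) = _
      unfold dec
      rw [show 6 * Nat.pair i c = 6 * Nat.pair i c + 0 from rfl]
      rw [show (6 * Nat.pair i c + 0) % 6 = 0 from by omega,
        show (6 * Nat.pair i c + 0) / 6 = Nat.pair i c from by omega]
      simp [Nat.unpair_pair]
  | scanB i c t =>
      show dec (6 * Nat.pair (Nat.pair i c) (cond t 1 0) + 1) = _
      unfold dec
      rw [show (6 * Nat.pair (Nat.pair i c) (cond t 1 0) + 1) % 6 = 1 from by omega,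
        show (6 * Nat.pair (Nat.pair i c) (cond t 1 0) + 1) / 6
          = Nat.pair (Nat.pair i c) (cond t 1 0) from by omega]
      simp only [Nat.unpair_pair]
      cases t <;> rfl
  | scanC i c t =>
      show dec (6 * Nat.pair (Nat.pair i c) (cond t 1 0) + 2) = _
      unfold dec
      rw [show (6 * Nat.pair (Nat.pair i c) (cond t 1 0) + 2) % 6 = 2 from by omega,
        show (6 * Nat.pair (Nat.pair i c) (cond t 1 0) + 2) / 6
          = Nat.pair (Nat.pair i c) (cond t 1 0) from by omega]
      simp only [Nat.unpair_pair]
      cases t <;> rfl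
  | wr k j =>
      show dec (6 * Nat.pair k j + 3) = _
      unfold dec
      rw [show (6 * Nat.pair k j + 3) % 6 = 3 from by omega,
        show (6 * Nat.pair k j + 3) / 6 = Nat.pair k j from by omega]
      simp [Nat.unpair_pair]
  | lp => rfl
  | hl => rfl

end MSt

/-- Base-3 digit of an intervention at a position. -/
def dg (itv : ℕ → Option Bool) (i : ℕ) : ℕ :=
  match itv i with
  | none => 0
  | some false => 1
  | some true => 2

theorem dg_lt (itv i) : dg itv i < 3 := by
  rcases h : itv i with _ | b
  · simp [dg, h]
  · cases b <;> simp [dg, h]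

def codeUpTo (d : ℕ → ℕ) : ℕ → ℕ
  | 0 => 0
  | i + 1 => codeUpTo d i + d i * 3 ^ i

theorem codeUpTo_lt (d : ℕ → ℕ) (hd : ∀ j, d j < 3) : ∀ i, codeUpTo d i < 3 ^ i := by
  intro i
  induction i with
  | zero => simp [codeUpTo]
  | succ i ih =>
      have := hd i
      have h3 : 3 ^ (i + 1) = 3 ^ i + 3 ^ i + 3 ^ i := by ring
      have : d i * 3 ^ i ≤ 2 * 3 ^ i := Nat.mul_le_mul_right _ (by omega)
      simp only [codeUpTo]
      omega

theorem codeUpTo_inj (d d' : ℕ → ℕ) (hd : ∀ j, d j < 3) (hd' : ∀ j, d' j < 3) :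
    ∀ i, codeUpTo d i = codeUpTo d' i → ∀ j < i, d j = d' j := by
  intro i
  induction i with
  | zero => intro _ j hj; omega
  | succ i ih =>
      intro h j hj
      have l1 := codeUpTo_lt d hd i
      have l2 := codeUpTo_lt d' hd' i
      simp only [codeUpTo] at h
      have hdd : d i = d' i := by
        have e1 : (codeUpTo d i + d i * 3 ^ i) / 3 ^ i = d i := by
          rw [Nat.add_mul_div_right _ _ (by positivity), Nat.div_eq_of_lt l1]; omega
        have e2 : (codeUpTo d' i + d' i * 3 ^ i) / 3 ^ i = d' i := by
          rw [Nat.add_mul_div_right _ _ (by positivity), Nat.div_eq_of_lt l2]; omega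
        rw [← e1, ← e2, h]
      rcases Nat.lt_succ_iff_lt_or_eq.1 hj with hj | rfl
      · have h' : codeUpTo d i = codeUpTo d' i := by rw [hdd] at h; omega
        exact ih h' j hj
      · exact hdd

/-- The signature of an intervention `α` over atoms `0..N`. -/
def sigN (N : ℕ) (α : Lint) : ℕ := codeUpTo (dg α.itv) (N + 1)

theorem sigN_inj {N : ℕ} {α α' : Lint} (hα : α.maxAtom ≤ N) (hα' : α'.maxAtom ≤ N)
    (h : sigN N α = sigN N α') : α = α' := by
  apply lint_itv_inj
  intro i
  have := codeUpTo_inj _ _ (dg_lt α.itv) (dg_lt α'.itv) (N + 1) h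
  by_cases hi : i ≤ N
  · have hdg := this i (by omega)
    unfold dg at hdg
    rcases h1 : α.itv i with _ | b <;> rcases h2 : α'.itv i with _ | b'
    · rfl
    · rw [h1, h2] at hdg; cases b' <;> simp at hdg
    · rw [h1, h2] at hdg; cases b <;> simp at hdg
    · rw [h1, h2] at hdg; cases b <;> cases b' <;> simp_all
  · rw [lint_itv_none_of_gt α i (by omega), lint_itv_none_of_gt α' i (by omega)]

section Machine

variable (N : ℕ) (S : List Lint) (beh : Lint → Option (ℕ → Bool))

/-- The output tape prescribed for the `k`-th antecedent. -/
def yk (k : ℕ) : ℕ → Bool :=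
  match beh (S.getD k Lint.top) with
  | some y => y
  | none => fun _ => false

/-- The control state entered after the scan phase, given the computed signature. -/
def nextOf (c : ℕ) : ℕ :=
  match S.findIdx? (fun α => sigN N α == c) with
  | none => MSt.e MSt.hl
  | some k =>
      match beh (S.getD k Lint.top) with
      | none => MSt.e MSt.lp
      | some _ => MSt.e (MSt.wr k (N + 1))

open MSt in
/-- The transition function on abstract states. -/
def delM : MSt → Bool → Option (ℕ × Bool × Bool)
  | scanA i c, t => some (e (scanB i c t), !t, true)
  | scanB i c b, t => some (e (scanC i c b), t, false)
  | scanC i c b, t =>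
      let d : ℕ := if t = b then (cond b 2 1) else 0
      let c' := c + d * 3 ^ i
      if i < N then some (e (scanA (i + 1) c'), !t, true)
      else some (nextOf N S beh c', !t, true)
  | wr k j, t =>
      if j = 0 then some (e hl, yk S beh k 0, false)
      else some (e (wr k (j - 1)), if j ≤ N then yk S beh k j else t, false)
  | MSt.lp, t => some (e MSt.lp, t, false)
  | MSt.hl, _ => none

def delQ (q : ℕ) (t : Bool) : Option (ℕ × Bool × Bool) := delM N S beh (MSt.dec q) t

open MSt in
def usedStates : List MSt :=
  ((List.range (N + 1)).flatMap fun i => (List.range (3 ^ (N + 1))).flatMap fun c =>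
    [scanA i c, scanB i c false, scanB i c true, scanC i c false, scanC i c true]) ++
  ((List.range S.length).flatMap fun k => (List.range (N + 2)).map fun j => wr k j) ++
  [MSt.lp]

def EB : ℕ := ((usedStates N S).map MSt.e).foldr max 0 + 1

theorem lt_EB_of_used {s : MSt} (h : s ∈ usedStates N S) : MSt.e s < EB N S := by
  have : MSt.e s ≤ ((usedStates N S).map MSt.e).foldr max 0 := by
    have hm : MSt.e s ∈ (usedStates N S).map MSt.e := List.mem_map_of_mem h
    generalize (usedStates N S).map MSt.e = l at hm
    induction l with
    | nil => cases hm
    | cons a l ih =>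
        rcases List.mem_cons.1 hm with rfl | hm
        · exact le_max_left _ _
        · exact le_trans (ih hm) (le_max_right _ _)
  unfold EB
  omega

/-- The detection machine. -/
def detMachine : Machine := mkMachine (EB N S) (delQ N S beh)

end Machine

end CausalSim

namespace CausalSim

/-! Part 7: run analysis of the detection machine -/

theorem writeTape_none {itv : ℕ → Option Bool} {t : ℕ → Bool} {p : ℕ} {b : Bool}
    (h : itv p = none) : writeTape itv t p b = Function.update t p b := by
  rw [writeTape, if_pos h]

theorem writeTape_some {itv : ℕ → Option Bool} {t : ℕ → Bool} {p : ℕ} {b b' : Bool}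
    (h : itv p = some b') : writeTape itv t p b = t := by
  rw [writeTape, if_neg (by simp [h])]

theorem writeTape_self {itv : ℕ → Option Bool} {t : ℕ → Bool} {p : ℕ} :
    writeTape itv t p (t p) = t := by
  rw [writeTape]
  split
  · exact Function.update_eq_self _ _
  · rfl

theorem writeTape_ne {itv : ℕ → Option Bool} {t : ℕ → Bool} {p q : ℕ} {b : Bool}
    (h : q ≠ p) : writeTape itv t p b q = t q := by
  rw [writeTape]
  split
  · exact Function.update_of_ne h _ _
  · rfl

theorem initTape_some {itv : ℕ → Option Bool} {x : ℕ → Bool} {i : ℕ} {b : Bool}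
    (h : itv i = some b) : initTape itv x i = b := by
  simp [initTape, h]

section Run

variable (N : ℕ) (S : List Lint) (beh : Lint → Option (ℕ → Bool)) (itv : ℕ → Option Bool)

theorem step_one {s : MSt} (hs : s ∈ usedStates N S) {c : Cfg} (hq : c.q = MSt.e s)
    {v : ℕ × Bool × Bool} (hv : delM N S beh s (c.tape c.pos) = some v) :
    MStep (detMachine N S beh) itv c
      ⟨v.1, movePos c.pos v.2.2, writeTape itv c.tape c.pos v.2.1⟩ := by
  rw [detMachine, mstep_iff, stepF, if_pos (by rw [hq]; exact lt_EB_of_used N S hs)]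
  rw [delQ, hq, MSt.dec_e, hv]
  rfl

theorem mem_used_scanA {i c : ℕ} (hi : i ≤ N) (hc : c < 3 ^ (N + 1)) :
    MSt.scanA i c ∈ usedStates N S := by
  apply List.mem_append_left
  apply List.mem_append_left
  simp only [List.mem_flatMap, List.mem_range]
  exact ⟨i, by omega, c, by simp [hc], by simp⟩

theorem mem_used_scanB {i c : ℕ} (t : Bool) (hi : i ≤ N) (hc : c < 3 ^ (N + 1)) :
    MSt.scanB i c t ∈ usedStates N S := by
  apply List.mem_append_left
  apply List.mem_append_left
  simp only [List.mem_flatMap, List.mem_range]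
  exact ⟨i, by omega, c, by simp [hc], by cases t <;> simp⟩

theorem mem_used_scanC {i c : ℕ} (t : Bool) (hi : i ≤ N) (hc : c < 3 ^ (N + 1)) :
    MSt.scanC i c t ∈ usedStates N S := by
  apply List.mem_append_left
  apply List.mem_append_left
  simp only [List.mem_flatMap, List.mem_range]
  exact ⟨i, by omega, c, by simp [hc], by cases t <;> simp⟩

theorem mem_used_wr {k j : ℕ} (hk : k < S.length) (hj : j ≤ N + 1) :
    MSt.wr k j ∈ usedStates N S := by
  apply List.mem_append_left
  apply List.mem_append_right
  simp only [List.mem_flatMap, List.mem_range, List.mem_map]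
  exact ⟨k, hk, j, by simp; omega⟩

theorem mem_used_lp : MSt.lp ∈ usedStates N S := by
  apply List.mem_append_right
  simp

section ScanRun

variable (x : ℕ → Bool)

/-- The three-step toggle block at position `i`. -/
theorem scan_block (i : ℕ) (hi : i ≤ N) (c : ℕ) (hc : c < 3 ^ (N + 1)) :
    Relation.ReflTransGen (MStep (detMachine N S beh) itv)
      ⟨MSt.e (MSt.scanA i c), i, initTape itv x⟩
      ⟨(if i < N then MSt.e (MSt.scanA (i + 1) (c + dg itv i * 3 ^ i))
          else nextOf N S beh (c + dg itv i * 3 ^ i)), i + 1, initTape itv x⟩ := by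
  set tape₀ := initTape itv x with htape₀
  set t₀ := tape₀ i with ht₀
  set tape₁ := writeTape itv tape₀ i (!t₀) with htape₁
  -- step 1
  have s1 : MStep (detMachine N S beh) itv ⟨MSt.e (MSt.scanA i c), i, tape₀⟩
      ⟨MSt.e (MSt.scanB i c t₀), i + 1, tape₁⟩ := by
    have := step_one N S beh itv (mem_used_scanA N S hi hc)
      (c := ⟨MSt.e (MSt.scanA i c), i, tape₀⟩) rfl
      (v := (MSt.e (MSt.scanB i c t₀), !t₀, true)) (by rw [delM])
    simpa [movePos] using this
  -- step 2
  have s2 : MStep (detMachine N S beh) itv ⟨MSt.e (MSt.scanB i c t₀), i + 1, tape₁⟩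
      ⟨MSt.e (MSt.scanC i c t₀), i, tape₁⟩ := by
    have := step_one N S beh itv (mem_used_scanB N S t₀ hi hc)
      (c := ⟨MSt.e (MSt.scanB i c t₀), i + 1, tape₁⟩) rfl
      (v := (MSt.e (MSt.scanC i c t₀), tape₁ (i + 1), false)) (by rw [delM])
    simpa [movePos, writeTape_self] using this
  -- step 3
  set t' := tape₁ i with ht'
  have key : (if t' = t₀ then (cond t₀ 2 1) else 0) = dg itv i ∧
      writeTape itv tape₁ i (!t') = tape₀ := by
    rcases hint : itv i with _ | b
    · have htp : t' = !t₀ := by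
        rw [ht', htape₁, writeTape_none hint, Function.update_self]
      constructor
      · rw [htp, if_neg (by cases t₀ <;> simp), dg, hint]
      · rw [htp, Bool.not_not, htape₁, writeTape_none hint, writeTape_none hint,
          Function.update_idem, ht₀, Function.update_eq_self]
    · have h10 : tape₁ = tape₀ := by rw [htape₁, writeTape_some hint]
      have htb : t₀ = b := by rw [ht₀, htape₀]; exact initTape_some hint
      have htp : t' = t₀ := by rw [ht', h10]
      constructor
      · rw [htp, if_pos rfl, dg, hint, htb]; cases b <;> rfl
      · rw [writeTape_some hint, h10]
  have s3 : MStep (detMachine N S beh) itv ⟨MSt.e (MSt.scanC i c t₀), i, tape₁⟩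
      ⟨(if i < N then MSt.e (MSt.scanA (i + 1) (c + dg itv i * 3 ^ i))
          else nextOf N S beh (c + dg itv i * 3 ^ i)), i + 1, tape₀⟩ := by
    have := step_one N S beh itv (mem_used_scanC N S t₀ hi hc)
      (c := ⟨MSt.e (MSt.scanC i c t₀), i, tape₁⟩) rfl
      (v := ((if i < N then MSt.e (MSt.scanA (i + 1) (c + dg itv i * 3 ^ i))
          else nextOf N S beh (c + dg itv i * 3 ^ i)), !t', true))
      (by
        rw [delM]
        simp only [key.1]
        split <;> rw [← key.1])
    simp only [movePos, if_pos trivial] at this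
    rw [key.2] at this
    exact this
  exact Relation.ReflTransGen.head s1 (Relation.ReflTransGen.head s2
    (Relation.ReflTransGen.single s3))

end ScanRun

section ScanAll

variable (x : ℕ → Bool)

theorem scan_all : ∀ m i, i + m = N →
    Relation.ReflTransGen (MStep (detMachine N S beh) itv)
      ⟨MSt.e (MSt.scanA i (codeUpTo (dg itv) i)), i, initTape itv x⟩
      ⟨nextOf N S beh (codeUpTo (dg itv) (N + 1)), N + 1, initTape itv x⟩ := by
  intro m
  induction m with
  | zero =>
      intro i hi
      have hiN : i = N := by omega
      rw [hiN]
      have hc : codeUpTo (dg itv) N < 3 ^ (N + 1) :=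
        lt_of_lt_of_le (codeUpTo_lt _ (dg_lt itv) N)
          (Nat.pow_le_pow_right (by omega) (by omega))
      have := scan_block N S beh itv x N le_rfl (codeUpTo (dg itv) N) hc
      rw [if_neg (lt_irrefl N)] at this
      exact this
  | succ m ih =>
      intro i hi
      have hiN : i < N := by omega
      have hc : codeUpTo (dg itv) i < 3 ^ (N + 1) :=
        lt_of_lt_of_le (codeUpTo_lt _ (dg_lt itv) i)
          (Nat.pow_le_pow_right (by omega) (by omega))
      have h1 := scan_block N S beh itv x i (by omega) (codeUpTo (dg itv) i) hc
      rw [if_pos hiN] at h1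
      exact Relation.ReflTransGen.trans h1 (ih (i + 1) (by omega))

end ScanAll

/-- The tape after the write phase down from position `j`. -/
def WrT (y : ℕ → Bool) : ℕ → (ℕ → Bool) → (ℕ → Bool)
  | 0, tp => writeTape itv tp 0 (y 0)
  | j + 1, tp => WrT y j (writeTape itv tp (j + 1) (if j + 1 ≤ N then y (j + 1) else tp (j + 1)))

theorem wr_run (k : ℕ) (hk : k < S.length) :
    ∀ j, j ≤ N + 1 → ∀ tp,
    Relation.ReflTransGen (MStep (detMachine N S beh) itv)
      ⟨MSt.e (MSt.wr k j), j, tp⟩ ⟨MSt.e MSt.hl, 0, WrT N itv (yk S beh k) j tp⟩ := by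
  intro j
  induction j with
  | zero =>
      intro _ tp
      apply Relation.ReflTransGen.single
      have := step_one N S beh itv (mem_used_wr N S hk (by omega))
        (c := ⟨MSt.e (MSt.wr k 0), 0, tp⟩) rfl
        (v := (MSt.e MSt.hl, yk S beh k 0, false)) (by rw [delM]; simp)
      simpa [movePos, WrT] using this
  | succ j ih =>
      intro hj tp
      have s1 := step_one N S beh itv (mem_used_wr N S hk hj)
        (c := ⟨MSt.e (MSt.wr k (j + 1)), j + 1, tp⟩) rfl
        (v := (MSt.e (MSt.wr k j), if j + 1 ≤ N then yk S beh k (j + 1) else tp (j + 1), false))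
        (by rw [delM]; simp)
      simp only [movePos, Nat.add_sub_cancel] at s1
      refine Relation.ReflTransGen.head s1 ?_
      rw [WrT]
      exact ih (by omega) _

theorem WrT_apply (y : ℕ → Bool) :
    ∀ j tp i, WrT N itv y j tp i =
      if i ≤ j ∧ i ≤ N ∧ itv i = none then y i else tp i := by
  intro j
  induction j with
  | zero =>
      intro tp i
      by_cases hi : i = 0
      · subst hi
        rcases h0 : itv 0 with _ | b
        · rw [WrT, writeTape_none h0, Function.update_self, if_pos ⟨le_rfl, by omega, rfl⟩]
        · rw [WrT, writeTape_some h0, if_neg (by simp [h0])]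
      · rw [WrT, writeTape_ne hi, if_neg (by omega)]
  | succ j ih =>
      intro tp i
      rw [WrT, ih]
      by_cases h1 : i ≤ j ∧ i ≤ N ∧ itv i = none
      · rw [if_pos h1, if_pos ⟨by omega, h1.2⟩]
      · rw [if_neg h1]
        by_cases h2 : i = j + 1
        · subst h2
          rcases h0 : itv (j + 1) with _ | b
          · rw [writeTape_none h0, Function.update_self]
            by_cases h3 : j + 1 ≤ N
            · rw [if_pos h3, if_pos ⟨le_rfl, h3, rfl⟩]
            · rw [if_neg h3, if_neg (by omega)]
          · rw [writeTape_some h0, if_neg (by simp [h0])]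
        · by_cases h3 : i ≤ j + 1 ∧ i ≤ N ∧ itv i = none
          · exact absurd ⟨by omega, h3.2⟩ h1
          · rw [writeTape_ne h2, if_neg h3]

theorem findIdx?_spec {γ : Type*} [Inhabited γ] (p : γ → Bool) :
    ∀ l : List γ, (∃ a ∈ l, p a = true) →
    ∃ k, l.findIdx? p = some k ∧ k < l.length ∧ p (l.getD k default) = true := by
  intro l
  induction l with
  | nil => rintro ⟨a, ha, -⟩; cases ha
  | cons a l ih =>
      rintro ⟨b, hb, hpb⟩
      by_cases hpa : p a = true
      · exact ⟨0, by simp [List.findIdx?_cons, hpa], by simp, by simpa using hpa⟩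
      · have hbl : b ∈ l := by
          rcases List.mem_cons.1 hb with rfl | h
          · exact absurd hpb hpa
          · exact h
        obtain ⟨k, h1, h2, h3⟩ := ih ⟨b, hbl, hpb⟩
        refine ⟨k + 1, ?_, by simp; omega, by simpa using h3⟩
        rw [List.findIdx?_cons, if_neg hpa, h1]
        rfl

end Run

instance : Inhabited Lint := ⟨Lint.top⟩

theorem detMachine_correct (N : ℕ) (S : List Lint) (beh : Lint → Option (ℕ → Bool))
    (hS : ∀ α' ∈ S, α'.maxAtom ≤ N)
    (hM : ∀ α' ∈ S, ∀ y, beh α' = some y → Models y α')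
    (α : Lint) (hα : α ∈ S) (x : ℕ → Bool) :
    (beh α = none → Outputs (detMachine N S beh) α.itv x = ∅) ∧
    (∀ y, beh α = some y →
      ∃ y', Outputs (detMachine N S beh) α.itv x = {y'} ∧ ∀ i ≤ N, y' i = y i) := by
  set itv := α.itv with hitv
  set tape₀ := initTape itv x with htape₀
  have hstart0 : (⟨0, 0, tape₀⟩ : Cfg)
      = ⟨MSt.e (MSt.scanA 0 (codeUpTo (dg itv) 0)), 0, tape₀⟩ := by
    simp [MSt.e, codeUpTo, Nat.pair]
  have hscan : Relation.ReflTransGen (MStep (detMachine N S beh) itv)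
      ⟨0, 0, tape₀⟩ ⟨nextOf N S beh (sigN N α), N + 1, tape₀⟩ := by
    rw [hstart0]
    exact scan_all N S beh itv x N 0 (by omega)
  -- locate α in S
  obtain ⟨k, hk1, hk2, hk3⟩ := findIdx?_spec (fun α' => sigN N α' == sigN N α) S
    ⟨α, hα, by simp⟩
  have hgd : S.getD k default ∈ S := by
    rw [List.getD_eq_getElem?_getD]
    rw [List.getElem?_eq_getElem hk2]
    simp only [Option.getD_some]
    exact List.getElem_mem _
  have hαk : S.getD k Lint.top = α := by
    have : S.getD k Lint.top = S.getD k default := rfl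
    rw [this]
    exact sigN_inj (hS _ hgd) (hS α hα) (by simpa using hk3)
  constructor
  · -- looping case
    intro hbeh
    have hnext : nextOf N S beh (sigN N α) = MSt.e MSt.lp := by
      rw [nextOf, hk1]
      simp only [hαk, hbeh]
    rw [hnext] at hscan
    rw [detMachine]
    apply outputs_empty (c₀ := ⟨MSt.e MSt.lp, N + 1, tape₀⟩) hscan
      (P := fun c => c.q = MSt.e MSt.lp) rfl
    · intro c c' hP hstep
      rw [mstep_iff, stepF] at hstep
      split at hstep
      · rw [delQ, hP, MSt.dec_e] at hstep
        simp only [delM, Option.map_some, Option.some_inj] at hstep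
        rw [← hstep]
      · cases hstep
    · intro c hP
      rw [stepF, if_pos (by rw [hP]; exact lt_EB_of_used N S (mem_used_lp N S))]
      rw [delQ, hP, MSt.dec_e]
      simp [delM]
  · -- writing case
    intro y hbeh
    have hyk : yk S beh k = y := by rw [yk, hαk, hbeh]
    have hnext : nextOf N S beh (sigN N α) = MSt.e (MSt.wr k (N + 1)) := by
      rw [nextOf, hk1]
      simp only [hαk, hbeh]
    rw [hnext] at hscan
    have hwr := wr_run N S beh itv k hk2 (N + 1) le_rfl tape₀
    rw [hyk] at hwr
    have hrun := Relation.ReflTransGen.trans hscan hwr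
    have hhalt : stepF (EB N S) (delQ N S beh) itv ⟨MSt.e MSt.hl, 0, WrT N itv y (N + 1) tape₀⟩
        = none := by
      rw [stepF]
      split
      · rw [delQ, MSt.dec_e]; rfl
      · rfl
    refine ⟨WrT N itv y (N + 1) tape₀, ?_, ?_⟩
    · rw [detMachine]
      exact outputs_singleton hrun hhalt
    · intro i hi
      rw [WrT_apply]
      rcases h0 : itv i with _ | b
      · rw [if_pos ⟨by omega, hi, rfl⟩]
      · rw [if_neg (by simp), htape₀, initTape_some h0,
          hM α hα y hbeh i b (by rw [← hitv]; exact h0)]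

end CausalSim

namespace CausalSim

/-! Part 8: satisfaction vs propositional evaluation, and the main lemma -/

theorem satgen_iff_evalA (O : Lint → Set (ℕ → Bool)) (x v : ℕ → Bool)
    (w : Lint → PropForm → Bool) (Nb : ℕ) :
    ∀ φ : LForm, (∀ i, i ≤ Nb → x i = v i) → φ.maxAtom ≤ Nb →
    (∀ p ∈ condsOf φ, ((∀ y ∈ O p.1, p.2.eval y = true) ↔ w p.1 p.2 = true)) →
    (SatGen O x φ ↔ φ.evalA v w = true) := by
  intro φ
  induction φ with
  | atom i =>
      intro hx hm _
      have := hx i hm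
      simp only [SatGen, LForm.evalA]
      rw [this]
  | cond α β =>
      intro _ _ hc
      have := hc (α, β) (by simp [condsOf])
      simp only [SatGen, LForm.evalA]
      exact this
  | neg φ ih =>
      intro hx hm hc
      simp only [SatGen, LForm.evalA, Bool.not_eq_true']
      rw [ih hx hm hc]
      simp
  | and φ ψ ih1 ih2 =>
      intro hx hm hc
      simp only [SatGen, LForm.evalA, Bool.and_eq_true]
      rw [ih1 hx (le_trans (le_max_left _ _) hm)
          (fun p hp => hc p (List.mem_append_left _ hp)),
        ih2 hx (le_trans (le_max_right _ _) hm)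
          (fun p hp => hc p (List.mem_append_right _ hp))]
  | or φ ψ ih1 ih2 =>
      intro hx hm hc
      simp only [SatGen, LForm.evalA, Bool.or_eq_true]
      rw [ih1 hx (le_trans (le_max_left _ _) hm)
          (fun p hp => hc p (List.mem_append_left _ hp)),
        ih2 hx (le_trans (le_max_right _ _) hm)
          (fun p hp => hc p (List.mem_append_right _ hp))]

/-- The main lemma: every `AX_det`-consistent formula has a deterministic model. -/
theorem main_lemma {ψ : LForm} (hcons : ¬ Deriv axF (.neg ψ)) :
    ∃ M : CSM, inMdet M ∧ M.Sat ψ := by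
  classical
  obtain ⟨v, w, hsat, hcoh⟩ := lemA hcons
  set N := ψ.maxAtom with hN
  set S := ψ.ants with hSdef
  set o : Lint → Option (ℕ → Bool) := fun α =>
    if h : ∃ y, Models y α ∧ ∀ β ∈ Bpsi ψ α, w α β = β.eval y then some h.choose else none
    with ho
  have hMo : ∀ α' ∈ S, ∀ y, o α' = some y → Models y α' := by
    intro α' _ y hy
    rw [ho] at hy
    dsimp only at hy
    split at hy
    · rename_i h
      simp only [Option.some_inj] at hy
      rw [← hy]
      exact h.choose_spec.1
    · cases hy
  have hSm : ∀ α' ∈ S, α'.maxAtom ≤ N := fun α' h => maxAtom_of_mem_ants h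
  set T := detMachine N S o with hT
  set x : ℕ → Bool := fun i => if i ≤ N then v i else false with hx
  have hfin : FinSupp x := by
    apply Set.Finite.subset (Set.finite_le_nat N)
    intro i hi
    simp only [Set.mem_setOf_eq, hx] at hi ⊢
    by_contra hgt
    rw [if_neg hgt] at hi
    cases hi
  refine ⟨⟨T, x, hfin⟩, ?_, ?_⟩
  · rw [inMdet, hT, detMachine]
    exact mkMachine_det _ _
  · rw [CSM.Sat]
    rw [satgen_iff_evalA (fun α => Outputs T α.itv x) x v w N ψ
      (fun i hi => by rw [hx]; simp [hi]) le_rfl ?_]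
    · exact hsat
    intro p hp
    obtain ⟨α, β⟩ := p
    have hα : α ∈ S := mem_ants_of_mem_condsOf hp
    have hβm : β.maxAtom ≤ N := (maxAtom_of_mem_condsOf hp).2
    have hβB : β ∈ Bpsi ψ α := mem_Bpsi.2 hp
    have hcorr := detMachine_correct N S o hSm hMo α hα x
    show (∀ y ∈ Outputs T α.itv x, β.eval y = true) ↔ w α β = true
    rcases hoα : o α with _ | y
    · -- empty outputs: the box is vacuously true and `w` is all-true on `Bpsi`
      have hout : Outputs T α.itv x = ∅ := hcorr.1 hoα
      rw [hout]
      simp only [Set.mem_empty_iff_false, false_implies, implies_true, true_iff]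
      rcases hcoh α hα with hall | hex
      · exact hall β hβB
      · exfalso
        rw [ho] at hoα
        dsimp only at hoα
        split at hoα
        · cases hoα
        · rename_i h
          exact h (by
            obtain ⟨y, hy1, hy2⟩ := hex
            exact ⟨y, hy1, fun β' hβ' => hy2 β' hβ'⟩)
    · -- singleton outputs
      obtain ⟨y', houts, hagree⟩ := hcorr.2 y hoα
      have hspec : Models y α ∧ ∀ β' ∈ Bpsi ψ α, w α β' = β'.eval y := by
        rw [ho] at hoα
        dsimp only at hoα
        split at hoα
        · rename_i h
          simp only [Option.some_inj] at hoα
          rw [← hoα]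
          exact h.choose_spec
        · cases hoα
      rw [houts]
      have heval : β.eval y' = β.eval y :=
        eval_congr β y' y (fun i hi => hagree i (le_trans hi hβm))
      have hw : w α β = β.eval y := hspec.2 β hβB
      simp only [Set.mem_singleton_iff, forall_eq]
      rw [heval, hw]

end CausalSim

namespace CausalSim

/-- Completeness of `AX_det` for the class `M_det`: every
`L`-formula true in every deterministic model is a theorem of `AX_det`;
equivalently, every `AX_det`-consistent formula is satisfied by some model
in `M_det`. -/
theorem AXdet_complete :
    (∀ φ : LForm, (∀ M : CSM, inMdet M → M.Sat φ) → AXdet φ) ∧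
    (∀ φ : LForm, ¬ AXdet (.neg φ) → ∃ M : CSM, inMdet M ∧ M.Sat φ) := by
  have main : ∀ φ : LForm, ¬ AXdet (.neg φ) → ∃ M : CSM, inMdet M ∧ M.Sat φ := by
    intro φ h
    exact main_lemma h
  refine ⟨?_, main⟩
  intro φ hvalid
  by_contra hnd
  have h2 : ¬ AXdet (.neg (.neg φ)) := by
    intro hd
    apply hnd
    apply Deriv.mp' hd
    intro v w
    simp only [LForm.evalA, Bool.not_not]
    exact fun h => h
  obtain ⟨M, hdet, hsat⟩ := main (.neg φ) h2
  exact hsat (hvalid M hdet)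

end CausalSim
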